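/- For every f and f' in V, the quantity 𝟙(f,f') := 3^{−|supp₃ f ∪ supp₃ f'|} · ∏_{r | Δ(f)Δ(f')} ( ∑_{(z,z') ∈ 𝔽₃² with f(r)z + f'(r)z' = 0} χ(zf + z'f')(r) ) is equal to 0 or 1. -/

import Mathlib

/-! ### The Eisenstein integers `ℤ[j]` -/

/-- The Eisenstein integers `ℤ[j]`: elements `a + b·ω` with `a b : ℤ`,
where `ω = j = (−1 + i√3)/2` satisfies `ω² + ω + 1 = 0`. -/
@[ext] structure Eisen where
  re : ℤ
  im : ℤ
deriving DecidableEq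

namespace Eisen

instance : Zero Eisen := ⟨⟨0, 0⟩⟩
instance : One Eisen := ⟨⟨1, 0⟩⟩
instance : Add Eisen := ⟨fun a b => ⟨a.re + b.re, a.im + b.im⟩⟩
instance : Neg Eisen := ⟨fun a => ⟨-a.re, -a.im⟩⟩
/-- `(a+bω)(c+dω) = (ac − bd) + (ad + bc − bd)ω`, using `ω² = −1 − ω`. -/
instance : Mul Eisen := ⟨fun a b =>
  ⟨a.re * b.re - a.im * b.im, a.re * b.im + a.im * b.re - a.im * b.im⟩⟩

@[simp] lemma zero_re : (0 : Eisen).re = 0 := rfl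
@[simp] lemma zero_im : (0 : Eisen).im = 0 := rfl
@[simp] lemma one_re : (1 : Eisen).re = 1 := rfl
@[simp] lemma one_im : (1 : Eisen).im = 0 := rfl
@[simp] lemma add_re (a b : Eisen) : (a + b).re = a.re + b.re := rfl
@[simp] lemma add_im (a b : Eisen) : (a + b).im = a.im + b.im := rfl
@[simp] lemma neg_re (a : Eisen) : (-a).re = -a.re := rfl
@[simp] lemma neg_im (a : Eisen) : (-a).im = -a.im := rfl
@[simp] lemma mul_re (a b : Eisen) : (a * b).re = a.re * b.re - a.im * b.im := rfl
@[simp] lemma mul_im (a b : Eisen) :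
    (a * b).im = a.re * b.im + a.im * b.re - a.im * b.im := rfl

instance commRing : CommRing Eisen where
  add_assoc a b c := by ext <;> simp <;> ring
  zero_add a := by ext <;> simp
  add_zero a := by ext <;> simp
  add_comm a b := by ext <;> simp <;> ring
  neg_add_cancel a := by ext <;> simp
  mul_assoc a b c := by ext <;> simp <;> ring
  one_mul a := by ext <;> simp
  mul_one a := by ext <;> simp
  left_distrib a b c := by ext <;> simp <;> ring
  right_distrib a b c := by ext <;> simp <;> ring
  zero_mul a := by ext <;> simp
  mul_zero a := by ext <;> simp
  mul_comm a b := by ext <;> simp <;> ring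
  nsmul := nsmulRec
  zsmul := zsmulRec

/-- The root of unity `ω = j` as an Eisenstein integer. -/
def ω : Eisen := ⟨0, 1⟩

/-- The complex number `j = (−1 + i√3)/2`. -/
noncomputable def jC : ℂ := ⟨-(1 / 2), Real.sqrt 3 / 2⟩

/-- The canonical embedding `ℤ[j] → ℂ`, sending `a + bω` to `a + b·j`. -/
noncomputable def toComplex (z : Eisen) : ℂ := (z.re : ℂ) + (z.im : ℂ) * jC

/-- The norm `N(z) = z·z̄ = a² − ab + b²` of an Eisenstein integer. -/
def normE (z : Eisen) : ℤ := z.re ^ 2 - z.re * z.im + z.im ^ 2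

/-- `π` is a *standard prime*: a prime element of `ℤ[j]` that is primary
(`π ≡ 2 mod 3`) and has positive imaginary part. These are exactly the elements
arising in the standard decomposition `p = π·π̄` of rational primes `p ≡ 1 (mod 3)`. -/
noncomputable def IsStandardPrime (π : Eisen) : Prop :=
  Prime π ∧ (3 : Eisen) ∣ (π - 2) ∧ 0 < (toComplex π).im

open scoped Classical in
/-- The cubic residue symbol `(α/π)₃ ∈ {1, j, j²}` (or `0` if `π ∣ α`):
the unique power `j^m` with `α^((N(π)−1)/3) ≡ j^m (mod π)`. -/
noncomputable def cubicSym (π α : Eisen) : ℂ :=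
  if π ∣ α then 0
  else if π ∣ α ^ (((normE π).toNat - 1) / 3) - 1 then 1
  else if π ∣ α ^ (((normE π).toNat - 1) / 3) - ω then jC
  else jC ^ 2

open scoped Classical in
/-- The standard prime above a rational prime `p ≡ 1 (mod 3)` (junk value `0` otherwise). -/
noncomputable def stdPrime (p : ℕ) : Eisen :=
  if h : ∃ π : Eisen, IsStandardPrime π ∧ normE π = p then h.choose else 0

end Eisen

/-! ### The cubic Dirichlet characters `χ_p` and the characters `χ(f)` -/

open Eisen

open scoped Classical in
/-- The cubic character `χ_3` modulo `9`, of order 3, normalized by `χ_3(2) = j`. -/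
noncomputable def chi3 (n : ℤ) : ℂ :=
  if n % 9 = 1 ∨ n % 9 = 8 then 1
  else if n % 9 = 2 ∨ n % 9 = 7 then jC
  else if n % 9 = 4 ∨ n % 9 = 5 then jC ^ 2
  else 0

open scoped Classical in
/-- The distinguished cubic character `χ_p` for `p ∈ 𝒫₃`: for `p ≡ 1 (mod 3)` it is
`χ_p(n) = (n/π)₃` with `π` the standard prime above `p`; for `p = 3` it is `χ_3`. -/
noncomputable def chiAt (p : ℕ) (n : ℤ) : ℂ :=
  if p = 3 then chi3 n else cubicSym (stdPrime p) (n : Eisen)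

/-- `f` belongs to `V`: a finitely supported function `𝒫₃ → 𝔽₃`
(extended by zero off the set `𝒫₃ = {p prime : p ≡ 0, 1 (mod 3)}`). -/
def IsV (f : ℕ → ZMod 3) : Prop :=
  {p | f p ≠ 0}.Finite ∧ ∀ p, f p ≠ 0 → p.Prime ∧ (p % 3 = 0 ∨ p % 3 = 1)

/-- `f` belongs to `V*`: it belongs to `V` and `f(3) = 0`. -/
def IsVstar (f : ℕ → ZMod 3) : Prop := IsV f ∧ f 3 = 0

/-- The Dirichlet character `χ(f) = ∏_{p ∈ 𝒫₃} χ_p^{f(p)}` attached to `f ∈ V`. -/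
noncomputable def chiF (f : ℕ → ZMod 3) (n : ℤ) : ℂ :=
  ∏ᶠ p : ℕ, chiAt p n ^ (f p).val

/-- `supp₃ f`: the support of `f` restricted to the primes `≡ 1 (mod 3)`. -/
def supp3 (f : ℕ → ZMod 3) : Set ℕ := {p | f p ≠ 0 ∧ p % 3 = 1}

/-- `Δ(f)`: the product of the primes in `supp₃ f`. -/
noncomputable def Deltaf (f : ℕ → ZMod 3) : ℕ := ∏ᶠ p ∈ supp3 f, p

open scoped Classical in
/-- The quantity `𝟙(f, f')`. -/
noncomputable def indicFF (f f' : ℕ → ZMod 3) : ℂ :=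
  (3 : ℂ) ^ (-(Set.ncard (supp3 f ∪ supp3 f') : ℤ)) *
    ∏ r ∈ (Deltaf f * Deltaf f').primeFactors,
      ∑ zz ∈ Finset.univ.filter
          (fun zz : ZMod 3 × ZMod 3 => f r * zz.1 + f' r * zz.2 = 0),
        chiF (fun p => zz.1 * f p + zz.2 * f' p) (r : ℤ)

set_option linter.unnecessarySeqFocus false
namespace Eisen
lemma jC_mul_jC : jC * jC = ⟨-(1/2), -(Real.sqrt 3/2)⟩ := by
  have h3 : Real.sqrt 3 * Real.sqrt 3 = 3 := Real.mul_self_sqrt (by norm_num)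
  have hj : jC = ⟨-(1/2), Real.sqrt 3 / 2⟩ := rfl
  rw [hj]
  apply Complex.ext <;> simp [Complex.mul_re, Complex.mul_im]
  · linear_combination (-(1:ℝ)/4) * h3
  · ring
lemma jC_cube : jC ^ 3 = 1 := by
  have h3 : Real.sqrt 3 * Real.sqrt 3 = 3 := Real.mul_self_sqrt (by norm_num)
  have hj : jC = ⟨-(1/2), Real.sqrt 3 / 2⟩ := rfl
  have h : jC ^ 3 = (jC * jC) * jC := by ring
  rw [h, jC_mul_jC, hj]
  apply Complex.ext <;> simp [Complex.mul_re, Complex.mul_im]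
  · linear_combination ((1:ℝ)/4) * h3
  · ring
lemma jC_sum : 1 + jC + jC ^ 2 = 0 := by
  have hj : jC = ⟨-(1/2), Real.sqrt 3 / 2⟩ := rfl
  have h : jC ^ 2 = jC * jC := by ring
  rw [h, jC_mul_jC, hj]
  apply Complex.ext <;> simp [Complex.add_re, Complex.add_im] <;> ring

lemma normE_mul (a b : Eisen) : normE (a * b) = normE a * normE b := by
  simp only [normE, mul_re, mul_im]; ring

def intToEisen : ℤ →+* Eisen where
  toFun n := ⟨n, 0⟩
  map_one' := rfl
  map_mul' a b := by ext <;> simp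
  map_zero' := rfl
  map_add' a b := by ext <;> simp

lemma intCast_eisen (n : ℤ) : (n : Eisen) = ⟨n, 0⟩ := (eq_intCast intToEisen n).symm

lemma normE_intCast (n : ℤ) : normE (n : Eisen) = n ^ 2 := by
  rw [intCast_eisen]; simp [normE]
end Eisen
open Eisen in
lemma cubicSym_cube {π α : Eisen} (h : ¬ π ∣ α) : (cubicSym π α) ^ 3 = 1 := by
  rw [cubicSym, if_neg h]
  have h2 : (jC ^ 2) ^ 3 = 1 := by
    rw [← pow_mul, mul_comm, pow_mul, jC_cube, one_pow]
  split_ifs <;> simp [jC_cube, h2]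

open Eisen in
lemma chi3_cube {r : ℕ} (hr3 : r % 3 = 1) : (chi3 (r : ℤ)) ^ 3 = 1 := by
  have h9 : (r : ℤ) % 9 = ((r % 9 : ℕ) : ℤ) := by
    omega
  have : r % 9 = 1 ∨ r % 9 = 4 ∨ r % 9 = 7 := by omega
  rw [chi3]
  have h2 : (jC ^ 2) ^ 3 = 1 := by
    rw [← pow_mul, mul_comm, pow_mul, jC_cube, one_pow]
  rcases this with h | h | h <;> rw [h9, h] <;> norm_num [jC_cube, h2]

open Eisen in
lemma chiAt_cube {p r : ℕ} (hp : p.Prime) (hr : r.Prime) (hr3 : r % 3 = 1)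
    (hpr : p ≠ r) : (chiAt p (r : ℤ)) ^ 3 = 1 := by
  rw [chiAt]
  split_ifs with h3
  · exact chi3_cube hr3
  · apply cubicSym_cube
    rw [stdPrime]
    split_ifs with hex
    · intro hdvd
      obtain ⟨hprime, hnorm⟩ := hex.choose_spec
      obtain ⟨c, hc⟩ := hdvd
      have hN : normE (((r : ℤ) : Eisen)) = normE hex.choose * normE c := by
        rw [hc, normE_mul]
      rw [normE_intCast, hnorm] at hN
      have hdvd2 : (p : ℤ) ∣ (r : ℤ) ^ 2 := ⟨normE c, hN⟩
      have : p ∣ r ^ 2 := by exact_mod_cast hdvd2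
      have : p ∣ r := hp.dvd_of_dvd_pow this
      exact hpr ((Nat.prime_dvd_prime_iff_eq hp hr).mp this)
    · intro hdvd
      rw [zero_dvd_iff, intCast_eisen] at hdvd
      have : (r : ℤ) = 0 := congrArg Eisen.re hdvd
      exact hr.ne_zero (by exact_mod_cast this)
lemma pow_mod3 {x : ℂ} (hx : x ^ 3 = 1) (m : ℕ) : x ^ m = x ^ (m % 3) := by
  conv_lhs => rw [← Nat.div_add_mod m 3]
  rw [pow_add, pow_mul, hx, one_pow, one_mul]

lemma pow_val_add {x : ℂ} (hx : x ^ 3 = 1) (a b : ZMod 3) :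
    x ^ (a + b).val = x ^ a.val * x ^ b.val := by
  rw [ZMod.val_add, ← pow_mod3 hx, pow_add]

lemma pow_val_mul {x : ℂ} (hx : x ^ 3 = 1) (a b : ZMod 3) :
    x ^ (a * b).val = (x ^ a.val) ^ b.val := by
  rw [ZMod.val_mul, ← pow_mod3 hx, pow_mul]

lemma chiF_eq_prod (g : ℕ → ZMod 3) (T : Finset ℕ) (hT : ∀ p, g p ≠ 0 → p ∈ T)
    (n : ℤ) : chiF g n = ∏ p ∈ T, chiAt p n ^ (g p).val := by
  rw [chiF]
  apply finprod_eq_prod_of_mulSupport_subset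
  intro p hp
  simp only [Function.mulSupport, Set.mem_setOf_eq] at hp
  by_contra hpT
  apply hp
  have : g p = 0 := by by_contra h; exact hpT (hT p h)
  rw [this]; simp [ZMod.val_zero]

lemma one_add_w {w : ℂ} (hw : w ^ 3 = 1) :
    1 + w + w ^ 2 = 0 ∨ 1 + w + w ^ 2 = 3 := by
  have h : (w - 1) * (1 + w + w ^ 2) = 0 := by linear_combination hw
  rcases mul_eq_zero.mp h with h1 | h2
  · right
    have hw1 : w = 1 := sub_eq_zero.mp h1
    rw [hw1]; norm_num
  · left; exact h2
lemma zmod3_sum (g : ZMod 3 → ℂ) : ∑ z : ZMod 3, g z = g 0 + g 1 + g 2 := by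
  show ∑ z : Fin 3, g z = _
  exact Fin.sum_univ_three g

lemma key_sum {A B : ℂ} (hA : A ^ 3 = 1) (hB : B ^ 3 = 1) (a b : ZMod 3)
    (hab : ¬ (a = 0 ∧ b = 0)) :
    (∑ zz ∈ Finset.univ.filter (fun zz : ZMod 3 × ZMod 3 => a * zz.1 + b * zz.2 = 0),
      A ^ zz.1.val * B ^ zz.2.val) = 0 ∨
    (∑ zz ∈ Finset.univ.filter (fun zz : ZMod 3 × ZMod 3 => a * zz.1 + b * zz.2 = 0),
      A ^ zz.1.val * B ^ zz.2.val) = 3 := by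
  have cube : ∀ i j : ℕ, (A ^ i * B ^ j) ^ 3 = 1 := by
    intro i j
    rw [mul_pow, ← pow_mul, ← pow_mul, mul_comm i 3, mul_comm j 3, pow_mul, pow_mul,
      hA, hB, one_pow, one_pow, one_mul]
  have hv0 : (0 : ZMod 3).val = 0 := rfl
  have hv1 : (1 : ZMod 3).val = 1 := rfl
  have hv2 : (2 : ZMod 3).val = 2 := rfl
  rw [Finset.sum_filter, Fintype.sum_prod_type]
  fin_cases a <;> fin_cases b <;>
    simp (config := { decide := true }) only [zmod3_sum, hv0, hv1, hv2, pow_zero,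
      pow_one, mul_zero, zero_mul, mul_one, one_mul, if_true, if_false, add_zero,
      zero_add, ite_true, ite_false, reduceIte]
  · exact absurd ⟨rfl, rfl⟩ hab
  · rcases one_add_w (cube 1 0) with h | h
    · left; linear_combination h
    · right; linear_combination h
  · rcases one_add_w (cube 1 0) with h | h
    · left; linear_combination h
    · right; linear_combination h
  · rcases one_add_w (cube 0 1) with h | h
    · left; linear_combination h
    · right; linear_combination h
  · rcases one_add_w (cube 1 2) with h | h
    · left; linear_combination h - A ^ 2 * B * hB
    · right; linear_combination h - A ^ 2 * B * hB
  · rcases one_add_w (cube 1 1) with h | h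
    · left; linear_combination h
    · right; linear_combination h
  · rcases one_add_w (cube 0 1) with h | h
    · left; linear_combination h
    · right; linear_combination h
  · rcases one_add_w (cube 1 1) with h | h
    · left; linear_combination h
    · right; linear_combination h
  · rcases one_add_w (cube 1 2) with h | h
    · left; linear_combination h - A ^ 2 * B * hB
    · right; linear_combination h - A ^ 2 * B * hB
/-- For every `f, f' ∈ V`, the quantity `𝟙(f, f')` equals `0` or `1`. -/
theorem indicFF_eq_zero_or_one (f f' : ℕ → ZMod 3) (hf : IsV f) (hf' : IsV f') :
    indicFF f f' = 0 ∨ indicFF f f' = 1 := by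
  classical
  have hsub : supp3 f ⊆ {p | f p ≠ 0} := fun p hp => hp.1
  have hsub' : supp3 f' ⊆ {p | f' p ≠ 0} := fun p hp => hp.1
  have Ffin : (supp3 f).Finite := hf.1.subset hsub
  have F'fin : (supp3 f').Finite := hf'.1.subset hsub'
  set F : Finset ℕ := Ffin.toFinset with hF
  set F' : Finset ℕ := F'fin.toFinset with hF'
  set T : Finset ℕ := hf.1.toFinset ∪ hf'.1.toFinset with hT
  -- primes in F, F'
  have hFprime : ∀ p ∈ F, p.Prime := by
    intro p hp
    rw [hF, Set.Finite.mem_toFinset] at hp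
    exact (hf.2 p hp.1).1
  have hF'prime : ∀ p ∈ F', p.Prime := by
    intro p hp
    rw [hF', Set.Finite.mem_toFinset] at hp
    exact (hf'.2 p hp.1).1
  -- Deltas as finset products
  have hD : Deltaf f = ∏ p ∈ F, p := by
    rw [Deltaf, hF]; exact finprod_mem_eq_finite_toFinset_prod _ Ffin
  have hD' : Deltaf f' = ∏ p ∈ F', p := by
    rw [Deltaf, hF']; exact finprod_mem_eq_finite_toFinset_prod _ F'fin
  have hDne : Deltaf f ≠ 0 := by
    rw [hD, Finset.prod_ne_zero_iff]
    exact fun p hp => (hFprime p hp).ne_zero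
  have hD'ne : Deltaf f' ≠ 0 := by
    rw [hD', Finset.prod_ne_zero_iff]
    exact fun p hp => (hF'prime p hp).ne_zero
  have hR : (Deltaf f * Deltaf f').primeFactors = F ∪ F' := by
    rw [Nat.primeFactors_mul hDne hD'ne, hD, hD',
      Nat.primeFactors_prod hFprime, Nat.primeFactors_prod hF'prime]
  -- cardinality
  have hcard : Set.ncard (supp3 f ∪ supp3 f') = (F ∪ F').card := by
    rw [← Set.ncard_coe_finset (F ∪ F'), Finset.coe_union, hF, hF',
      Set.Finite.coe_toFinset, Set.Finite.coe_toFinset]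
  -- properties of r ∈ F ∪ F'
  have hrprops : ∀ r ∈ F ∪ F', r.Prime ∧ r % 3 = 1 ∧ (f r ≠ 0 ∨ f' r ≠ 0) := by
    intro r hr
    rcases Finset.mem_union.mp hr with h | h
    · rw [hF, Set.Finite.mem_toFinset] at h
      exact ⟨(hf.2 r h.1).1, h.2, Or.inl h.1⟩
    · rw [hF', Set.Finite.mem_toFinset] at h
      exact ⟨(hf'.2 r h.1).1, h.2, Or.inr h.1⟩
  -- membership in T
  have hTmem : ∀ p, (f p ≠ 0 ∨ f' p ≠ 0) → p ∈ T := by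
    intro p hp
    rw [hT, Finset.mem_union, Set.Finite.mem_toFinset, Set.Finite.mem_toFinset]
    exact hp
  have hTprime : ∀ p ∈ T, p.Prime := by
    intro p hp
    rw [hT, Finset.mem_union, Set.Finite.mem_toFinset, Set.Finite.mem_toFinset] at hp
    rcases hp with h | h
    · exact (hf.2 p h).1
    · exact (hf'.2 p h).1
  -- the inner sum for each r
  set s : ℕ → ℂ := fun r =>
    ∑ zz ∈ Finset.univ.filter
        (fun zz : ZMod 3 × ZMod 3 => f r * zz.1 + f' r * zz.2 = 0),
      chiF (fun p => zz.1 * f p + zz.2 * f' p) (r : ℤ) with hs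
  have hsr : ∀ r ∈ F ∪ F', s r = 0 ∨ s r = 3 := by
    intro r hr
    obtain ⟨hrp, hr3, hrne⟩ := hrprops r hr
    have hrT : r ∈ T := hTmem r hrne
    set A : ℂ := ∏ p ∈ T.erase r, chiAt p (r : ℤ) ^ (f p).val with hA
    set B : ℂ := ∏ p ∈ T.erase r, chiAt p (r : ℤ) ^ (f' p).val with hB
    have hcube : ∀ p ∈ T.erase r, (chiAt p (r : ℤ)) ^ 3 = 1 := by
      intro p hp
      have hpT := Finset.mem_of_mem_erase hp
      exact chiAt_cube (hTprime p hpT) hrp hr3 (Finset.ne_of_mem_erase hp)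
    have hA3 : A ^ 3 = 1 := by
      rw [hA, ← Finset.prod_pow]
      apply Finset.prod_eq_one
      intro p hp
      rw [← pow_mul, mul_comm, pow_mul, hcube p hp, one_pow]
    have hB3 : B ^ 3 = 1 := by
      rw [hB, ← Finset.prod_pow]
      apply Finset.prod_eq_one
      intro p hp
      rw [← pow_mul, mul_comm, pow_mul, hcube p hp, one_pow]
    have hterm : ∀ zz : ZMod 3 × ZMod 3, f r * zz.1 + f' r * zz.2 = 0 →
        chiF (fun p => zz.1 * f p + zz.2 * f' p) (r : ℤ)
          = A ^ zz.1.val * B ^ zz.2.val := by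
      intro zz hzz
      have hsupp : ∀ p, (fun p => zz.1 * f p + zz.2 * f' p) p ≠ 0 → p ∈ T := by
        intro p hp
        apply hTmem
        by_contra hc
        push_neg at hc
        simp only [hc.1, hc.2, mul_zero, add_zero, ne_eq, not_true_eq_false] at hp
      rw [chiF_eq_prod _ T hsupp]
      rw [← Finset.mul_prod_erase T _ hrT]
      have hzr : zz.1 * f r + zz.2 * f' r = 0 := by
        rw [mul_comm zz.1, mul_comm zz.2]; exact hzz
      rw [hzr, ZMod.val_zero, pow_zero, one_mul]
      have : ∀ p ∈ T.erase r,
          chiAt p (r : ℤ) ^ (zz.1 * f p + zz.2 * f' p).val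
            = (chiAt p (r : ℤ) ^ (f p).val) ^ zz.1.val
              * (chiAt p (r : ℤ) ^ (f' p).val) ^ zz.2.val := by
        intro p hp
        have hx := hcube p hp
        rw [pow_val_add hx, mul_comm zz.1, mul_comm zz.2,
          pow_val_mul hx, pow_val_mul hx]
      rw [Finset.prod_congr rfl this, Finset.prod_mul_distrib,
        Finset.prod_pow, Finset.prod_pow, hA, hB]
    have hsum : s r = ∑ zz ∈ Finset.univ.filter
        (fun zz : ZMod 3 × ZMod 3 => f r * zz.1 + f' r * zz.2 = 0),
        A ^ zz.1.val * B ^ zz.2.val := by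
      rw [hs]
      apply Finset.sum_congr rfl
      intro zz hzz
      exact hterm zz (Finset.mem_filter.mp hzz).2
    rw [hsum]
    apply key_sum hA3 hB3
    intro hc
    rcases hrne with h | h
    · exact h hc.1
    · exact h hc.2
  -- assemble
  rw [indicFF, hR]
  by_cases h0 : ∃ r ∈ F ∪ F', s r = 0
  · left
    obtain ⟨r, hr, hr0⟩ := h0
    rw [Finset.prod_eq_zero hr hr0, mul_zero]
  · right
    push_neg at h0
    have hall : ∀ r ∈ F ∪ F', s r = 3 := by
      intro r hr
      rcases hsr r hr with h | h
      · exact absurd h (h0 r hr)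
      · exact h
    rw [Finset.prod_congr rfl hall, Finset.prod_const, hcard]
    rw [← zpow_natCast (3 : ℂ) (F ∪ F').card,
      ← zpow_add₀ (by norm_num : (3 : ℂ) ≠ 0), neg_add_cancel, zpow_zero]
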